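/- arXiv:cs/0403040 — 3 statements merged into one kernel-verified Lean document; each statement's English description precedes it below -/
import Mathlib

section
/- In a directed acyclic graph G, if an arc (i,j) is a bridge of the underlying undirected graph (i.e., its removal disconnects the component containing i and j), then reversing the arc (i,j) to (j,i) yields a graph that is still acyclic. -/
/-- A digraph given by its arc set is acyclic if no vertex lies on a directed cycle. -/
def DAcyclic {V : Type*} (A : Finset (V × V)) : Prop :=
  ∀ a : V, ¬ Relation.TransGen (fun x y => (x, y) ∈ A) a a

/-- The underlying undirected simple graph of an arc set. -/
def toGraph {V : Type*} [DecidableEq V] (A : Finset (V × V)) : SimpleGraph V where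
  Adj a b := a ≠ b ∧ ((a, b) ∈ A ∨ (b, a) ∈ A)
  symm := ⟨fun _ _ h => ⟨h.1.symm, h.2.symm⟩⟩
  loopless := ⟨fun _ h => h.1 rfl⟩

instance {V : Type*} [DecidableEq V] (A : Finset (V × V)) :
    DecidableRel (toGraph A).Adj :=
  fun a b => inferInstanceAs (Decidable (a ≠ b ∧ ((a, b) ∈ A ∨ (b, a) ∈ A)))

/-- Reversing a bridge arc of an acyclic digraph keeps it acyclic. -/
theorem stmt_0 {V : Type*} [DecidableEq V] (A : Finset (V × V))
    (hA : DAcyclic A) (i j : V) (hij : (i, j) ∈ A)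
    (hb : s(i, j) ∈ (toGraph A).edgeSet ∧ (toGraph A).IsBridge s(i, j)) :
    DAcyclic (insert (j, i) (A.erase (i, j))) := by
  have hji : (j, i) ∉ A := fun h =>
    hA i (Relation.TransGen.head hij (Relation.TransGen.single h))
  set R : V → V → Prop := fun x y => (x, y) ∈ A.erase (i, j) with hRdef
  have hRA : ∀ {x y}, R x y → (x, y) ∈ A := fun h => Finset.mem_of_mem_erase h
  have hRtA : ∀ {x y}, Relation.TransGen R x y →
      Relation.TransGen (fun a b => (a, b) ∈ A) x y := fun h =>
    by induction h with
      | single hr => exact .single (hRA hr)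
      | tail _ hr ih => exact ih.tail (hRA hr)
  -- decompose paths in the modified digraph
  have key : ∀ x y : V,
      Relation.ReflTransGen (fun a b => (a, b) ∈ insert (j, i) (A.erase (i, j))) x y →
      Relation.ReflTransGen R x y ∨
        (Relation.ReflTransGen R x j ∧ Relation.ReflTransGen R i y) := by
    intro x y h
    induction h with
    | refl => exact Or.inl Relation.ReflTransGen.refl
    | @tail b c _ hbc ih =>
      rcases Finset.mem_insert.mp hbc with h1 | h2
      · obtain ⟨rfl, rfl⟩ : b = j ∧ c = i := Prod.mk.injEq .. ▸ Prod.mk.inj h1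
        rcases ih with h | ⟨h, _⟩
        · exact Or.inr ⟨h, Relation.ReflTransGen.refl⟩
        · exact Or.inr ⟨h, Relation.ReflTransGen.refl⟩
      · rcases ih with h | ⟨h, h'⟩
        · exact Or.inl (h.tail h2)
        · exact Or.inr ⟨h, h'.tail h2⟩
  -- any R-path gives reachability avoiding the bridge edge
  have toReach : ∀ x y : V, Relation.ReflTransGen R x y →
      ((toGraph A) \ SimpleGraph.fromEdgeSet {s(i, j)}).Reachable x y := by
    intro x y h
    induction h with
    | refl => exact SimpleGraph.Reachable.refl _
    | @tail b c _ hbc ih =>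
      refine ih.trans (SimpleGraph.Adj.reachable ?_)
      have hbcA : (b, c) ∈ A := hRA hbc
      have hbcne : b ≠ c := by
        rintro rfl; exact hA b (Relation.TransGen.single hbcA)
      have hne1 : (b, c) ≠ (i, j) := Finset.ne_of_mem_erase hbc
      have hne2 : (b, c) ≠ (j, i) := by
        intro h; obtain ⟨h1, h2⟩ := Prod.mk.inj h; subst h1; subst h2; exact hji hbcA
      refine ⟨(show b ≠ c ∧ ((b, c) ∈ A ∨ (c, b) ∈ A) from ⟨hbcne, Or.inl hbcA⟩), ?_⟩
      simp only [SimpleGraph.fromEdgeSet_adj, Set.mem_singleton_iff, Sym2.eq,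
        Sym2.rel_iff', Prod.mk.injEq, Prod.swap_prod_mk]
      rintro ⟨h | h, -⟩
      · exact hne1 (Prod.ext h.1 h.2)
      · exact hne2 (Prod.ext h.1 h.2)
  have hnr := SimpleGraph.isBridge_iff.mp hb.2
  intro a hcyc
  obtain ⟨b, hab, hba⟩ := Relation.TransGen.head'_iff.mp hcyc
  have hRij : Relation.ReflTransGen R i j → False := fun h => hnr (toReach i j h)
  rcases Finset.mem_insert.mp hab with h1 | h2
  · obtain ⟨ha, hbe⟩ := Prod.mk.inj h1
    rw [ha, hbe] at hba
    rcases key i j hba with h | ⟨h, _⟩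
    · exact hRij h
    · exact hRij h
  · rcases key b a hba with h | ⟨h, h'⟩
    · exact hA a (hRtA (Relation.TransGen.head' h2 h))
    · exact hRij ((h'.tail h2).trans h)
end

section
/- Let T be a directed tree on N ≥ 3 vertices (an acyclic digraph whose underlying undirected graph is a tree) whose underlying tree has more than 2 leaves. Then there exist an arc e not in T and an arc f in T such that T ∪ {e} is acyclic and simply connected, (T ∪ {e}) \ {f} is acyclic with underlying undirected graph a tree, and the underlying tree of (T ∪ {e}) \ {f} has exactly one fewer leaf than that of T. -/
/-- The set of leaves (degree-1 vertices) of the underlying graph. -/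
def leaves {V : Type*} [DecidableEq V] [Fintype V] (A : Finset (V × V)) : Finset V :=
  Finset.univ.filter fun v => (toGraph A).degree v = 1

open Relation

lemma toGraph_adj {V : Type*} [DecidableEq V] (A : Finset (V × V)) (a b : V) :
    (toGraph A).Adj a b ↔ a ≠ b ∧ ((a, b) ∈ A ∨ (b, a) ∈ A) := Iff.rfl

lemma dacyclic_mono {V : Type*} {A B : Finset (V × V)} (h : A ⊆ B)
    (hB : DAcyclic B) : DAcyclic A := by
  intro a ha
  exact hB a (Relation.TransGen.mono (fun x y hxy => h hxy) a a ha)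

lemma rtg_insert {V : Type*} [DecidableEq V] {T : Finset (V × V)} {p q a d : V}
    (h : Relation.ReflTransGen (fun x y => (x, y) ∈ insert (p, q) T) a d) :
    Relation.ReflTransGen (fun x y => (x, y) ∈ T) a d ∨
      (Relation.ReflTransGen (fun x y => (x, y) ∈ T) a p ∧
        Relation.ReflTransGen (fun x y => (x, y) ∈ T) q d) := by
  induction h with
  | refl => exact Or.inl ReflTransGen.refl
  | tail h₁ h₂ ih =>
    rcases Finset.mem_insert.mp h₂ with h₂ | h₂
    · obtain ⟨h₂₁, h₂₂⟩ := Prod.ext_iff.mp h₂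
      dsimp at h₂₁ h₂₂
      subst h₂₁; subst h₂₂
      rcases ih with ih | ih
      · exact Or.inr ⟨ih, ReflTransGen.refl⟩
      · exact Or.inr ⟨ih.1, ReflTransGen.refl⟩
    · rcases ih with ih | ih
      · exact Or.inl (ih.tail h₂)
      · exact Or.inr ⟨ih.1, ih.2.tail h₂⟩

lemma dacyclic_insert {V : Type*} [DecidableEq V] {T : Finset (V × V)} {p q : V}
    (hacy : DAcyclic T)
    (hnr : ¬ Relation.ReflTransGen (fun x y => (x, y) ∈ T) q p) :
    DAcyclic (insert (p, q) T) := by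
  intro a ha
  obtain ⟨c, hac, hca⟩ := Relation.TransGen.head'_iff.mp ha
  rcases Finset.mem_insert.mp hac with h | h
  · obtain ⟨h₁, h₂⟩ := Prod.ext_iff.mp h
    dsimp at h₁ h₂
    subst h₁; subst h₂
    rcases rtg_insert hca with h' | h'
    · exact hnr h'
    · exact hnr h'.1
  · rcases rtg_insert hca with h' | h'
    · exact hacy a (Relation.TransGen.head' h h')
    · exact hnr ((h'.2.tail h).trans h'.1)


lemma key_adj_lemma {V : Type*} [DecidableEq V] {T : Finset (V × V)} {u x b : V}
    {e f : V × V} (hub : u ≠ b) (hux : u ≠ x) (hxb : x ≠ b)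
    (he : e = (u, x) ∨ e = (x, u))
    (hf : (f = (b, x) ∧ (x, b) ∉ T) ∨ (f = (x, b) ∧ (b, x) ∉ T)) :
    ∀ a c, (toGraph ((insert e T).erase f)).Adj a c ↔
      (((toGraph T).Adj a c ∧ s(a, c) ≠ s(b, x)) ∨ s(a, c) = s(u, x)) := by
  intro a c
  constructor
  · rintro ⟨hne, hm⟩
    have main : ∀ a' c', a' ≠ c' → (a', c') ∈ (insert e T).erase f →
        (((toGraph T).Adj a' c' ∧ s(a', c') ≠ s(b, x)) ∨ s(a', c') = s(u, x)) := by
      intro a' c' hne' hm'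
      obtain ⟨hnf, hm2⟩ := Finset.mem_erase.mp hm'
      rcases Finset.mem_insert.mp hm2 with hm3 | hm3
      · right
        rcases he with rfl | rfl <;>
          (obtain ⟨h1, h2⟩ := Prod.ext_iff.mp hm3; dsimp at h1 h2; subst h1; subst h2)
        · rfl
        · exact Sym2.eq_swap
      · left
        refine ⟨⟨hne', Or.inl hm3⟩, ?_⟩
        intro hs
        rw [Sym2.eq_iff] at hs
        rcases hs with ⟨rfl, rfl⟩ | ⟨rfl, rfl⟩
        · rcases hf with ⟨rfl, h'⟩ | ⟨rfl, h'⟩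
          · exact hnf rfl
          · exact h' hm3
        · rcases hf with ⟨rfl, h'⟩ | ⟨rfl, h'⟩
          · exact h' hm3
          · exact hnf rfl
    rcases hm with hm | hm
    · exact main a c hne hm
    · rcases main c a (Ne.symm hne) hm with ⟨h1, h2⟩ | h1
      · exact Or.inl ⟨h1.symm, by rw [Sym2.eq_swap]; exact h2⟩
      · exact Or.inr (by rw [Sym2.eq_swap]; exact h1)
  · have hnoteq : ∀ d : V × V, s(d.1, d.2) ≠ s(b, x) → d ≠ f := by
      intro d hds hdf
      subst hdf
      rcases hf with ⟨rfl, h'⟩ | ⟨rfl, h'⟩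
      · exact hds rfl
      · exact hds Sym2.eq_swap
    rintro (⟨⟨hne, hm⟩, hs⟩ | hs)
    · refine ⟨hne, ?_⟩
      rcases hm with hm | hm
      · exact Or.inl (Finset.mem_erase.mpr ⟨hnoteq (a, c) hs, Finset.mem_insert_of_mem hm⟩)
      · exact Or.inr (Finset.mem_erase.mpr
          ⟨hnoteq (c, a) (by rw [Sym2.eq_swap]; exact hs), Finset.mem_insert_of_mem hm⟩)
    · rw [Sym2.eq_iff] at hs
      have hef : e ≠ f := by
        rcases he with rfl | rfl <;> rcases hf with ⟨rfl, -⟩ | ⟨rfl, -⟩ <;>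
          intro h <;> (obtain ⟨h1, h2⟩ := Prod.ext_iff.mp h; dsimp at h1 h2)
        · exact hub h1
        · exact hux h1
        · exact hxb h1
        · exact hub h2
      have hmem : e ∈ (insert e T).erase f :=
        Finset.mem_erase.mpr ⟨hef, Finset.mem_insert_self e T⟩
      rcases hs with ⟨rfl, rfl⟩ | ⟨rfl, rfl⟩ <;> rcases he with he' | he'
      · exact ⟨hux, Or.inl (he' ▸ hmem)⟩
      · exact ⟨hux, Or.inr (he' ▸ hmem)⟩
      · exact ⟨Ne.symm hux, Or.inr (he' ▸ hmem)⟩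
      · exact ⟨Ne.symm hux, Or.inl (he' ▸ hmem)⟩

/-- In a directed tree with more than two leaves one can add an arc `e` and delete an
arc `f` so as to obtain a directed tree with one leaf fewer, keeping acyclicity and
connectedness throughout. -/
theorem stmt_6 {V : Type*} [DecidableEq V] [Fintype V] (N : ℕ) (hN : 3 ≤ N)
    (hcard : Fintype.card V = N) (T : Finset (V × V)) (hacy : DAcyclic T)
    (htree : (toGraph T).IsTree) (hleaves : 2 < (leaves T).card) :
    ∃ e ∉ T, ∃ f ∈ T,
      DAcyclic (insert e T) ∧ (toGraph (insert e T)).Connected ∧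
      DAcyclic ((insert e T).erase f) ∧ (toGraph ((insert e T).erase f)).IsTree ∧
      (leaves ((insert e T).erase f)).card = (leaves T).card - 1 := by
  classical
  -- every vertex has positive degree
  have hdegpos : ∀ v : V, 0 < (toGraph T).degree v := by
    intro v
    obtain ⟨w, hw⟩ := Fintype.exists_ne_of_one_lt_card (by omega) v
    obtain ⟨W⟩ := htree.isConnected.preconnected v w
    obtain ⟨y, hvy, -, -⟩ := SimpleGraph.Walk.exists_eq_cons_of_ne (Ne.symm hw) W
    exact (SimpleGraph.degree_pos_iff_exists_adj (toGraph T) v).mpr ⟨y, hvy⟩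
  -- a branch vertex
  obtain ⟨b, hb3⟩ : ∃ b : V, 3 ≤ (toGraph T).degree b := by
    by_contra hcon
    push_neg at hcon
    have hedges : (toGraph T).edgeFinset.card + 1 = N := htree.card_edgeFinset.trans hcard
    have hsum := (toGraph T).sum_degrees_eq_twice_card_edges
    have hsplit := Finset.sum_filter_add_sum_filter_not Finset.univ
      (fun v => (toGraph T).degree v = 1) (fun v => (toGraph T).degree v)
    have h1 : ∑ v ∈ Finset.univ.filter (fun v => (toGraph T).degree v = 1), (toGraph T).degree v
        = (leaves T).card := by
      rw [Finset.card_eq_sum_ones]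
      exact Finset.sum_congr rfl fun v hv => (Finset.mem_filter.mp hv).2
    have h2 : ∑ v ∈ Finset.univ.filter (fun v => ¬ (toGraph T).degree v = 1), (toGraph T).degree v
        = 2 * (Finset.univ.filter (fun v => ¬ (toGraph T).degree v = 1)).card := by
      rw [Finset.card_eq_sum_ones, Finset.mul_sum]
      refine Finset.sum_congr rfl fun v hv => ?_
      have hv1 := (Finset.mem_filter.mp hv).2
      have := hcon v
      have := hdegpos v
      omega
    have hcards := Finset.card_filter_add_card_filter_not
      (s := Finset.univ) (p := fun v : V => (toGraph T).degree v = 1)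
    have hlcard : (leaves T).card = (Finset.univ.filter (fun v : V => (toGraph T).degree v = 1)).card :=
      rfl
    rw [Finset.card_univ, hcard] at hcards
    omega
  -- a leaf
  obtain ⟨u, hu_leaf⟩ : ∃ u, u ∈ leaves T := Finset.card_pos.mp (by omega)
  have hdegu : (toGraph T).degree u = 1 := (Finset.mem_filter.mp hu_leaf).2
  have hub_ne : u ≠ b := fun h => by rw [h] at hdegu; omega
  -- a path from u to b
  obtain ⟨P, hPpath⟩ : ∃ P : (toGraph T).Walk u b, P.IsPath := by
    obtain ⟨w⟩ := htree.isConnected.preconnected u b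
    exact ⟨w.toPath.1, w.toPath.2⟩
  obtain ⟨p, hup, P₂, hPeq⟩ := P.exists_eq_cons_of_ne hub_ne
  have hp_mem : p ∈ P.support := by
    rw [hPeq, SimpleGraph.Walk.support_cons]
    exact List.mem_cons_of_mem _ P₂.start_mem_support
  have hadj_u_iff : ∀ y, (toGraph T).Adj u y ↔ y = p := by
    intro y
    constructor
    · intro h
      have h1 : y ∈ (toGraph T).neighborFinset u := (SimpleGraph.mem_neighborFinset (toGraph T) u y).mpr h
      have h2 : p ∈ (toGraph T).neighborFinset u := (SimpleGraph.mem_neighborFinset (toGraph T) u p).mpr hup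
      obtain ⟨w0, hw0⟩ := Finset.card_eq_one.mp (hdegu :
        ((toGraph T).neighborFinset u).card = 1)
      rw [hw0, Finset.mem_singleton] at h1 h2
      rw [h1, h2]
    · rintro rfl; exact hup
  -- neighbors of b on P are unique
  have hyc0 : ∀ y, (toGraph T).Adj b y → (hyP : y ∈ P.support) → y = P.reverse.getVert 1 := by
    intro y hby hyP
    have hyb : y ≠ b := hby.ne'
    have hQ1 : (P.takeUntil y hyP).IsPath := hPpath.takeUntil hyP
    have hbQ1 : b ∉ (P.takeUntil y hyP).support := by
      intro hb
      have hbd : b ∈ (P.dropUntil y hyP).support.tail :=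
        SimpleGraph.Walk.end_mem_tail_support_of_ne hyb _
      have hnd : ((P.takeUntil y hyP).append (P.dropUntil y hyP)).support.Nodup := by
        rw [SimpleGraph.Walk.take_spec]
        exact hPpath.support_nodup
      rw [SimpleGraph.Walk.support_append] at hnd
      exact List.disjoint_of_nodup_append hnd hb hbd
    have hcq : ((P.takeUntil y hyP).concat hby.symm).IsPath := by
      apply SimpleGraph.Walk.IsPath.mk'
      rw [SimpleGraph.Walk.support_concat]
      refine List.Nodup.append hQ1.support_nodup (List.nodup_singleton b) ?_
      intro a ha hb'
      rw [List.mem_singleton] at hb'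
      subst hb'
      exact hbQ1 ha
    obtain ⟨W, -, hWu⟩ := htree.existsUnique_path u b
    have hPW := hWu P hPpath
    have hCW := hWu _ hcq
    have hPeq2 : P = (P.takeUntil y hyP).concat hby.symm := by
      conv_rhs => rw [hCW]
      exact hPW
    have hrev : P.reverse = SimpleGraph.Walk.cons hby (P.takeUntil y hyP).reverse := by
      conv_lhs => rw [hPeq2]
      rw [SimpleGraph.Walk.reverse_concat]
    rw [hrev, show (1 : ℕ) = 0 + 1 from rfl, SimpleGraph.Walk.getVert_cons_succ,
      SimpleGraph.Walk.getVert_zero]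
  have hyc : ∀ y₁ y₂, (toGraph T).Adj b y₁ → y₁ ∈ P.support → (toGraph T).Adj b y₂ → y₂ ∈ P.support →
      y₁ = y₂ := fun y₁ y₂ h1 h2 h3 h4 => (hyc0 y₁ h1 h2).trans (hyc0 y₂ h3 h4).symm
  -- choose x : neighbor of b off the path
  obtain ⟨x, hbx, hxP⟩ : ∃ x, (toGraph T).Adj b x ∧ x ∉ P.support := by
    have hfilter := Finset.card_filter_add_card_filter_not
      (s := (toGraph T).neighborFinset b) (p := fun y => y ∈ P.support)
    have hS1 : (((toGraph T).neighborFinset b).filter (fun y => y ∈ P.support)).card ≤ 1 := by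
      apply Finset.card_le_one.mpr
      intro a ha c hc
      rw [Finset.mem_filter, SimpleGraph.mem_neighborFinset] at ha hc
      exact hyc a c ha.1 ha.2 hc.1 hc.2
    have hdb : ((toGraph T).neighborFinset b).card = (toGraph T).degree b := rfl
    have hpos : 0 < (((toGraph T).neighborFinset b).filter (fun y => ¬ y ∈ P.support)).card := by
      omega
    obtain ⟨x, hx⟩ := Finset.card_pos.mp hpos
    rw [Finset.mem_filter, SimpleGraph.mem_neighborFinset] at hx
    exact ⟨x, hx.1, hx.2⟩
  have hxb_ne : x ≠ b := hbx.ne'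
  have hux_ne : u ≠ x := fun h => hxP (h ▸ P.start_mem_support)
  have hxp_ne : x ≠ p := fun h => hxP (h ▸ hp_mem)
  have hnadjux : ¬ (toGraph T).Adj u x := fun h => hxp_ne ((hadj_u_iff x).mp h)
  have hux_nT : (u, x) ∉ T ∧ (x, u) ∉ T := by
    constructor <;> intro h <;> exact hnadjux ⟨hux_ne, by tauto⟩
  -- choose the arc f
  obtain ⟨f, hfT, hf⟩ : ∃ f, f ∈ T ∧
      ((f = (b, x) ∧ (x, b) ∉ T) ∨ (f = (x, b) ∧ (b, x) ∉ T)) := by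
    have h2cyc : ¬ ((b, x) ∈ T ∧ (x, b) ∈ T) := by
      rintro ⟨h1, h2⟩
      exact hacy b (Relation.TransGen.head h1 (Relation.TransGen.single h2))
    rcases hbx.2 with h | h
    · exact ⟨(b, x), h, Or.inl ⟨rfl, fun h' => h2cyc ⟨h, h'⟩⟩⟩
    · exact ⟨(x, b), h, Or.inr ⟨rfl, fun h' => h2cyc ⟨h', h⟩⟩⟩
  -- choose the arc e
  obtain ⟨e, he, hins⟩ : ∃ e, (e = (u, x) ∨ e = (x, u)) ∧ DAcyclic (insert e T) := by
    by_cases hru : Relation.ReflTransGen (fun a c => (a, c) ∈ T) x u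
    · refine ⟨(x, u), Or.inr rfl, dacyclic_insert hacy ?_⟩
      intro h
      rcases Relation.ReflTransGen.cases_head h with h' | ⟨c, hc1, hc2⟩
      · exact hux_ne h'
      · exact hacy u (Relation.TransGen.head' hc1 (hc2.trans hru))
    · exact ⟨(u, x), Or.inl rfl, dacyclic_insert hacy hru⟩
  have heT : e ∉ T := by rcases he with rfl | rfl; exacts [hux_nT.1, hux_nT.2]
  -- the new graphs
  have hle : (toGraph T) ≤ toGraph (insert e T) := by
    intro a c hadj
    exact ⟨hadj.1, by rcases hadj.2 with h | h
                      exacts [Or.inl (Finset.mem_insert_of_mem h),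
                              Or.inr (Finset.mem_insert_of_mem h)]⟩
  have hconn' : (toGraph (insert e T)).Connected := htree.isConnected.mono hle
  have key_adj : ∀ a c : V, (toGraph ((insert e T).erase f)).Adj a c ↔
      (((toGraph T).Adj a c ∧ s(a, c) ≠ s(b, x)) ∨ s(a, c) = s(u, x)) :=
    key_adj_lemma hub_ne hux_ne hxb_ne he hf
  -- adjacency facts
  have adj_u : ∀ w, (toGraph ((insert e T).erase f)).Adj u w ↔ (w = p ∨ w = x) := by
    intro w
    rw [key_adj]
    constructor
    · rintro (⟨h1, -⟩ | hs)
      · exact Or.inl ((hadj_u_iff w).mp h1)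
      · rcases Sym2.eq_iff.mp hs with ⟨-, rfl⟩ | ⟨hux', -⟩
        · exact Or.inr rfl
        · exact absurd hux' hux_ne
    · rintro (rfl | rfl)
      · refine Or.inl ⟨hup, fun hs => ?_⟩
        rcases Sym2.eq_iff.mp hs with ⟨h', -⟩ | ⟨h', -⟩
        exacts [hub_ne h', hux_ne h']
      · exact Or.inr (Sym2.eq_iff.mpr (Or.inl ⟨rfl, rfl⟩))
  have adj_x : ∀ w, (toGraph ((insert e T).erase f)).Adj x w ↔
      (((toGraph T).Adj x w ∧ w ≠ b) ∨ w = u) := by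
    intro w
    rw [key_adj]
    constructor
    · rintro (⟨h1, h2⟩ | hs)
      · refine Or.inl ⟨h1, fun hwb => h2 (Sym2.eq_iff.mpr (Or.inr ⟨rfl, hwb⟩))⟩
      · rcases Sym2.eq_iff.mp hs with ⟨hxu', -⟩ | ⟨-, rfl⟩
        · exact absurd hxu'.symm hux_ne
        · exact Or.inr rfl
    · rintro (⟨h1, h2⟩ | rfl)
      · refine Or.inl ⟨h1, fun hs => ?_⟩
        rcases Sym2.eq_iff.mp hs with ⟨hxb', -⟩ | ⟨-, hwb⟩
        exacts [hxb_ne hxb', h2 hwb]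
      · exact Or.inr (Sym2.eq_iff.mpr (Or.inr ⟨rfl, rfl⟩))
  have adj_b : ∀ w, (toGraph ((insert e T).erase f)).Adj b w ↔
      ((toGraph T).Adj b w ∧ w ≠ x) := by
    intro w
    rw [key_adj]
    constructor
    · rintro (⟨h1, h2⟩ | hs)
      · exact ⟨h1, fun hwx => h2 (Sym2.eq_iff.mpr (Or.inl ⟨rfl, hwx⟩))⟩
      · rcases Sym2.eq_iff.mp hs with ⟨hbu', -⟩ | ⟨hbx', -⟩
        · exact absurd hbu'.symm hub_ne
        · exact absurd hbx'.symm hxb_ne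
    · rintro ⟨h1, h2⟩
      refine Or.inl ⟨h1, fun hs => ?_⟩
      rcases Sym2.eq_iff.mp hs with ⟨-, hwx⟩ | ⟨hbx', -⟩
      exacts [h2 hwx, hxb_ne hbx'.symm]
  have adj_other : ∀ v, v ≠ u → v ≠ x → v ≠ b →
      ∀ w, ((toGraph ((insert e T).erase f)).Adj v w ↔ (toGraph T).Adj v w) := by
    intro v hvu hvx hvb w
    rw [key_adj]
    constructor
    · rintro (⟨h1, -⟩ | hs)
      · exact h1
      · rcases Sym2.eq_iff.mp hs with ⟨hvu', -⟩ | ⟨hvx', -⟩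
        exacts [absurd hvu' hvu, absurd hvx' hvx]
    · intro h1
      refine Or.inl ⟨h1, fun hs => ?_⟩
      rcases Sym2.eq_iff.mp hs with ⟨hvb', -⟩ | ⟨hvx', -⟩
      exacts [hvb hvb', hvx hvx']
  -- the transferred path from u to b
  have hPedges : ∀ ε ∈ P.edges, ε ∈ (toGraph ((insert e T).erase f)).edgeSet := by
    intro ε
    induction ε using Sym2.ind with
    | _ a c =>
      intro hε
      rw [SimpleGraph.mem_edgeSet, key_adj]
      refine Or.inl ⟨P.edges_subset_edgeSet hε, fun hs => ?_⟩
      rcases Sym2.eq_iff.mp hs with ⟨rfl, rfl⟩ | ⟨rfl, rfl⟩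
      · exact hxP (P.snd_mem_support_of_mem_edges hε)
      · exact hxP (P.fst_mem_support_of_mem_edges hε)
  -- connectivity
  have hreachb : (toGraph ((insert e T).erase f)).Reachable b u :=
    ⟨(P.transfer _ hPedges).reverse⟩
  have hreachx : (toGraph ((insert e T).erase f)).Reachable x u :=
    ((adj_x u).mpr (Or.inr rfl)).reachable
  have hkeyreach : ∀ v, (toGraph ((insert e T).erase f)).Reachable v u := by
    have main : ∀ (v w' : V) (W : (toGraph T).Walk v w'), w' = b →
        (toGraph ((insert e T).erase f)).Reachable v u := by
      intro v w' W
      induction W with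
      | nil => rintro rfl; exact hreachb
      | @cons a a₂ w'' hadj W ih =>
        intro hb'
        by_cases hs : s(a, a₂) = s(b, x)
        · rcases Sym2.eq_iff.mp hs with ⟨rfl, -⟩ | ⟨rfl, -⟩
          exacts [hreachb, hreachx]
        · exact (((key_adj a a₂).mpr (Or.inl ⟨hadj, hs⟩)).reachable).trans (ih hb')
    intro v
    obtain ⟨W⟩ := htree.isConnected.preconnected v b
    exact main v b W rfl
  have hconn2 : (toGraph ((insert e T).erase f)).Connected := by
    have hne : Nonempty V := Fintype.card_pos_iff.mp (by omega)
    exact ⟨fun a c => (hkeyreach a).trans (hkeyreach c).symm⟩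
  -- acyclicity
  have hacyc2 : (toGraph ((insert e T).erase f)).IsAcyclic := by
    intro v c hc
    by_cases hin : s(u, x) ∈ c.edges
    · -- the cycle passes through the new edge
      have hu_supp : u ∈ c.support := c.fst_mem_support_of_mem_edges hin
      have hc₁ := hc.rotate hu_supp
      obtain ⟨y, h1, q, hceq⟩ := SimpleGraph.Walk.not_nil_iff.mp hc₁.not_nil
      rw [hceq] at hc₁
      obtain ⟨z, h2, r, hqr⟩ := SimpleGraph.Walk.exists_eq_cons_of_ne h1.ne q.reverse
      have hq : q = (SimpleGraph.Walk.cons h2 r).reverse := by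
        rw [← hqr, SimpleGraph.Walk.reverse_reverse]
      have hqsup : q.support = r.support.reverse ++ [u] := by
        rw [hq, SimpleGraph.Walk.support_reverse, SimpleGraph.Walk.support_cons]
        simp
      have hqnd : q.support.Nodup := by
        have := hc₁.support_nodup
        rwa [SimpleGraph.Walk.support_cons, List.tail_cons] at this
      rw [hqsup] at hqnd
      have hur : u ∉ r.support := by
        intro h
        exact (List.disjoint_of_nodup_append hqnd) (List.mem_reverse.mpr h)
          (List.mem_singleton_self u)
      have hrnd : r.support.Nodup :=
        List.nodup_reverse.mp (List.nodup_append.mp hqnd).1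
      have hqe : q.edges = r.edges.reverse ++ [s(u, z)] := by
        rw [hq, SimpleGraph.Walk.edges_reverse, SimpleGraph.Walk.edges_cons]
        simp
      have hynz : y ≠ z := by
        rintro rfl
        have hnd := hc₁.isCircuit.isTrail.edges_nodup
        rw [SimpleGraph.Walk.edges_cons] at hnd
        have : s(u, y) ∈ q.edges := by
          rw [hqe]
          exact List.mem_append_right _ (List.mem_singleton_self _)
        exact (List.nodup_cons.mp hnd).1 this
      have hy' : y = p ∨ y = x := (adj_u y).mp h1
      have hz' : z = p ∨ z = x := (adj_u z).mp h2
      have hre : ∀ ε ∈ r.edges, ε ∈ (toGraph T).edgeSet ∧ ε ≠ s(b, x) := by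
        intro ε
        induction ε using Sym2.ind with
        | _ a₁ a₂ =>
          intro hε
          have h3 := r.edges_subset_edgeSet hε
          rw [SimpleGraph.mem_edgeSet] at h3
          rcases (key_adj a₁ a₂).mp h3 with ⟨hA, hB⟩ | hs
          · exact ⟨(SimpleGraph.mem_edgeSet (toGraph T)).mpr hA, hB⟩
          · exfalso
            rcases Sym2.eq_iff.mp hs with ⟨rfl, -⟩ | ⟨-, rfl⟩
            · exact hur (r.fst_mem_support_of_mem_edges hε)
            · exact hur (r.snd_mem_support_of_mem_edges hε)
      have hrT_path : (r.transfer (toGraph T) (fun ε hε => (hre ε hε).1)).IsPath :=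
        SimpleGraph.Walk.IsPath.mk'
          (by rw [SimpleGraph.Walk.support_transfer]; exact hrnd)
      have hrT_edges : ∀ ε ∈ (r.transfer (toGraph T) (fun ε hε => (hre ε hε).1)).edges,
          ε ≠ s(b, x) := by
        rw [SimpleGraph.Walk.edges_transfer]
        exact fun ε hε => (hre ε hε).2
      have hP₂path : P₂.IsPath := by
        have hP' := hPpath
        rw [hPeq] at hP'
        exact ((SimpleGraph.Walk.cons_isPath_iff _ _).mp hP').1
      have hxP₂ : x ∉ P₂.support := fun h => hxP (by
        rw [hPeq, SimpleGraph.Walk.support_cons]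
        exact List.mem_cons_of_mem _ h)
      have hQpath : (P₂.concat hbx).IsPath := by
        apply SimpleGraph.Walk.IsPath.mk'
        rw [SimpleGraph.Walk.support_concat]
        refine List.Nodup.append hP₂path.support_nodup (List.nodup_singleton x) ?_
        intro a ha hb'
        rw [List.mem_singleton] at hb'
        subst hb'
        exact hxP₂ ha
      have hQedge : s(b, x) ∈ (P₂.concat hbx).edges := by
        rw [SimpleGraph.Walk.edges_concat, List.concat_eq_append]
        exact List.mem_append_right _ (List.mem_singleton_self _)
      obtain ⟨W, -, hWu⟩ := htree.existsUnique_path p x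
      rcases hy' with hy | hy <;> rcases hz' with hz | hz
      · exact hynz (hy.trans hz.symm)
      · have h4 := hWu (((r.transfer (toGraph T) (fun ε hε => (hre ε hε).1)).copy hz hy).reverse)
          (by apply SimpleGraph.Walk.IsPath.reverse; rw [SimpleGraph.Walk.isPath_copy]; exact hrT_path)
        have h5 := hWu (P₂.concat hbx) hQpath
        have h6 : s(b, x) ∈
            (((r.transfer (toGraph T) (fun ε hε => (hre ε hε).1)).copy hz hy).reverse).edges := by
          rw [h4, ← h5]
          exact hQedge
        rw [SimpleGraph.Walk.edges_reverse, List.mem_reverse,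
          SimpleGraph.Walk.edges_copy] at h6
        exact (hrT_edges _ h6) rfl
      · have h4 := hWu ((r.transfer (toGraph T) (fun ε hε => (hre ε hε).1)).copy hz hy)
          (by simp only [SimpleGraph.Walk.isPath_copy]; exact hrT_path)
        have h5 := hWu (P₂.concat hbx) hQpath
        have h6 : s(b, x) ∈
            ((r.transfer (toGraph T) (fun ε hε => (hre ε hε).1)).copy hz hy).edges := by
          rw [h4, ← h5]
          exact hQedge
        rw [SimpleGraph.Walk.edges_copy] at h6
        exact (hrT_edges _ h6) rfl
      · exact hynz (hy.trans hz.symm)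
    · -- the cycle avoids the new edge : transfer it to T
      have hedges : ∀ ε ∈ c.edges, ε ∈ (toGraph T).edgeSet := by
        intro ε
        induction ε using Sym2.ind with
        | _ a₁ a₂ =>
          intro hε
          have h3 := c.edges_subset_edgeSet hε
          rw [SimpleGraph.mem_edgeSet] at h3
          rw [SimpleGraph.mem_edgeSet]
          rcases (key_adj a₁ a₂).mp h3 with ⟨hA, -⟩ | hs
          · exact hA
          · exact absurd (hs ▸ hε) hin
      exact htree.IsAcyclic (c.transfer (toGraph T) hedges) (hc.transfer hedges)
  -- leaves
  have hnbr_u : (toGraph ((insert e T).erase f)).neighborFinset u = {p, x} := by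
    ext w
    rw [SimpleGraph.mem_neighborFinset, adj_u, Finset.mem_insert, Finset.mem_singleton]
  have hdeg2_u : (toGraph ((insert e T).erase f)).degree u = 2 := by
    rw [← SimpleGraph.card_neighborFinset_eq_degree, hnbr_u]
    rw [Finset.card_insert_of_notMem (by simpa using Ne.symm hxp_ne), Finset.card_singleton]
  have hdeg2_x : (toGraph ((insert e T).erase f)).degree x = (toGraph T).degree x := by
    have hnbr : (toGraph ((insert e T).erase f)).neighborFinset x =
        insert u (((toGraph T).neighborFinset x).erase b) := by
      ext w
      rw [SimpleGraph.mem_neighborFinset, adj_x, Finset.mem_insert, Finset.mem_erase,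
        SimpleGraph.mem_neighborFinset]
      tauto
    rw [← SimpleGraph.card_neighborFinset_eq_degree, hnbr,
      Finset.card_insert_of_notMem (by
        rw [Finset.mem_erase, SimpleGraph.mem_neighborFinset]
        rintro ⟨-, h⟩
        exact hnadjux h.symm),
      Finset.card_erase_of_mem (by rw [SimpleGraph.mem_neighborFinset]; exact hbx.symm),
      ← SimpleGraph.card_neighborFinset_eq_degree]
    have h0 : ((toGraph T).neighborFinset x).card = (toGraph T).degree x := rfl
    have h1 := hdegpos x
    omega
  have hdeg2_b : (toGraph ((insert e T).erase f)).degree b = (toGraph T).degree b - 1 := by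
    have hnbr : (toGraph ((insert e T).erase f)).neighborFinset b =
        ((toGraph T).neighborFinset b).erase x := by
      ext w
      rw [SimpleGraph.mem_neighborFinset, adj_b, Finset.mem_erase,
        SimpleGraph.mem_neighborFinset]
      tauto
    rw [← SimpleGraph.card_neighborFinset_eq_degree, hnbr,
      Finset.card_erase_of_mem (by rw [SimpleGraph.mem_neighborFinset]; exact hbx),
      SimpleGraph.card_neighborFinset_eq_degree]
  have hdeg2_other : ∀ v, v ≠ u → v ≠ x → v ≠ b →
      (toGraph ((insert e T).erase f)).degree v = (toGraph T).degree v := by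
    intro v h1 h2 h3
    rw [← SimpleGraph.card_neighborFinset_eq_degree,
      ← SimpleGraph.card_neighborFinset_eq_degree]
    congr 1
    ext w
    rw [SimpleGraph.mem_neighborFinset, SimpleGraph.mem_neighborFinset,
      adj_other v h1 h2 h3]
  have hleaves2 : leaves ((insert e T).erase f) = (leaves T).erase u := by
    ext v
    simp only [leaves, Finset.mem_filter, Finset.mem_univ, true_and, Finset.mem_erase]
    by_cases hvu : v = u
    · subst hvu
      rw [hdeg2_u]
      constructor
      · omega
      · rintro ⟨h, -⟩; exact absurd rfl h
    · by_cases hvx : v = x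
      · subst hvx
        rw [hdeg2_x]
        exact ⟨fun h => ⟨fun h' => hux_ne h'.symm, h⟩, And.right⟩
      · by_cases hvb : v = b
        · subst hvb
          rw [hdeg2_b]
          constructor
          · intro h; exfalso; omega
          · rintro ⟨-, h⟩; omega
        · rw [hdeg2_other v hvu hvx hvb]
          exact ⟨fun h => ⟨hvu, h⟩, And.right⟩
  refine ⟨e, heT, f, hfT, hins, hconn', dacyclic_mono (Finset.erase_subset _ _) hins,
    ⟨hconn2, hacyc2⟩, ?_⟩
  rw [hleaves2, Finset.card_erase_of_mem hu_leaf]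
end

section
/- The transition relation of the Markov chain M' on simply connected acyclic digraphs is symmetric: if there is a single transition from state X to state Y with X ≠ Y, then there is a single transition from Y to X. -/
/-- One transition of the Markov chain `M'`: delete a non-bridge arc, reverse a
bridge arc, or add an arc so that the result is acyclic. -/
def Move {V : Type*} [DecidableEq V] (X Y : Finset (V × V)) : Prop :=
  (∃ i j : V, (i, j) ∈ X ∧ ¬(toGraph X).IsBridge s(i, j) ∧ Y = X.erase (i, j)) ∨
  (∃ i j : V, (i, j) ∈ X ∧ (toGraph X).IsBridge s(i, j) ∧
    Y = insert (j, i) (X.erase (i, j))) ∨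
  (∃ i j : V, (i, j) ∉ X ∧ Y = insert (i, j) X ∧ DAcyclic Y)

lemma dacyclic_not_mem_swap {V : Type*} {A : Finset (V × V)} (hA : DAcyclic A) {i j : V}
    (h : (i, j) ∈ A) : (j, i) ∉ A := fun h' =>
  hA i (Relation.TransGen.head h (Relation.TransGen.single h'))

lemma dacyclic_ne {V : Type*} {A : Finset (V × V)} (hA : DAcyclic A) {i j : V}
    (h : (i, j) ∈ A) : i ≠ j := by
  rintro rfl; exact hA i (Relation.TransGen.single h)

lemma toGraph_mono {V : Type*} [DecidableEq V] {X Y : Finset (V × V)} (h : X ⊆ Y) :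
    toGraph X ≤ toGraph Y := by
  intro a b hab
  exact ⟨hab.1, hab.2.imp (fun h' => h h') (fun h' => h h')⟩

lemma toGraph_reverse {V : Type*} [DecidableEq V] {X : Finset (V × V)} {i j : V}
    (hmem : (i, j) ∈ X) :
    toGraph (insert (j, i) (X.erase (i, j))) = toGraph X := by
  ext a b
  show a ≠ b ∧ _ ↔ a ≠ b ∧ _
  simp only [Finset.mem_insert, Finset.mem_erase]
  constructor
  · rintro ⟨hab, h⟩
    refine ⟨hab, ?_⟩
    rcases h with (h | ⟨_, h⟩) | (h | ⟨_, h⟩)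
    · obtain ⟨rfl, rfl⟩ := Prod.mk.injEq .. ▸ h
      right; exact hmem
    · left; exact h
    · obtain ⟨rfl, rfl⟩ := Prod.mk.injEq .. ▸ h
      left; exact hmem
    · right; exact h
  · rintro ⟨hab, h⟩
    refine ⟨hab, ?_⟩
    rcases h with h | h
    · by_cases h1 : (a, b) = (i, j)
      · right; left
        obtain ⟨rfl, rfl⟩ := Prod.mk.injEq .. ▸ h1
        rfl
      · left; right; exact ⟨h1, h⟩
    · by_cases h1 : (b, a) = (i, j)
      · left; left
        obtain ⟨rfl, rfl⟩ := Prod.mk.injEq .. ▸ h1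
        rfl
      · right; right; exact ⟨h1, h⟩

/-- The transition relation of `M'` is symmetric on simply connected acyclic
digraphs. -/
theorem stmt_12 {V : Type*} [DecidableEq V] (X Y : Finset (V × V))
    (hX : (toGraph X).Connected ∧ DAcyclic X)
    (hY : (toGraph Y).Connected ∧ DAcyclic Y)
    (hne : X ≠ Y) (h : Move X Y) : Move Y X := by
  rcases h with ⟨i, j, hmem, _, rfl⟩ | ⟨i, j, hmem, hbr, rfl⟩ | ⟨i, j, hmem, rfl, hac⟩
  · -- X → Y deleted a non-bridge arc; add it back
    refine Or.inr (Or.inr ⟨i, j, Finset.notMem_erase _ _, (Finset.insert_erase hmem).symm, hX.2⟩)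
  · -- X → Y reversed a bridge arc; reverse it back
    have hji : (j, i) ∉ X := dacyclic_not_mem_swap hX.2 hmem
    have hji' : (j, i) ∉ X.erase (i, j) := fun h => hji (Finset.mem_erase.mp h).2
    refine Or.inr (Or.inl ⟨j, i, Finset.mem_insert_self _ _, ?_, ?_⟩)
    · rw [toGraph_reverse hmem, Sym2.eq_swap]; exact hbr
    · rw [Finset.erase_insert hji', Finset.insert_erase hmem]
  · -- X → Y added an arc; delete it (it is not a bridge since `toGraph X` is connected)
    have hji : (j, i) ∉ X := by
      intro hji
      exact hY.2 i (Relation.TransGen.head (Finset.mem_insert_self _ _)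
        (Relation.TransGen.single (Finset.mem_insert_of_mem hji)))
    refine Or.inl ⟨i, j, Finset.mem_insert_self _ _, ?_, (Finset.erase_insert hmem).symm⟩
    rw [SimpleGraph.isBridge_iff]
    intro hnr
    apply hnr
    have hle : toGraph X ≤ toGraph (insert (i, j) X) \ SimpleGraph.fromEdgeSet {s(i, j)} := by
      intro a b hab
      rw [SimpleGraph.sdiff_adj]
      refine ⟨toGraph_mono (Finset.subset_insert _ _) hab, ?_⟩
      rw [SimpleGraph.fromEdgeSet_adj]
      rintro ⟨he, -⟩
      rw [Set.mem_singleton_iff, Sym2.eq_iff] at he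
      rcases he with ⟨rfl, rfl⟩ | ⟨rfl, rfl⟩ <;>
        rcases hab.2 with h | h <;> first | exact hmem h | exact hji h
    exact (hX.1.preconnected i j).mono hle
end
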